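/- Let A = F_p((t)) with the contractive automorphism α(x) = tx. Then the map ε : Aut(A, α) → F_p((t))^×, φ ↦ φ(1), is a group isomorphism from the group of topological group automorphisms of A commuting with α onto the multiplicative group of nonzero Laurent series, with inverse a ↦ (x ↦ a·x). -/

import Mathlib

open scoped Classical

/-- The absolute value on `F_p((t))`: `|x| = p^{-N}` where `N` is the least index with
nonzero coefficient, and `|0| = 0`. -/
noncomputable def labs (p : ℕ) (x : LaurentSeries (ZMod p)) : ℝ :=
  if x = 0 then 0 else (p : ℝ) ^ (-(HahnSeries.order x))

/-- The element `t ∈ F_p((t))`. -/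
noncomputable def tVar (p : ℕ) : LaurentSeries (ZMod p) := HahnSeries.single 1 1

/-- Ultrametric continuity of a map `F_p((t)) → F_p((t))`. -/
def LContinuous (p : ℕ) (f : LaurentSeries (ZMod p) → LaurentSeries (ZMod p)) : Prop :=
  ∀ x, ∀ ε : ℝ, 0 < ε → ∃ δ : ℝ, 0 < δ ∧ ∀ x', labs p (x' - x) < δ → labs p (f x' - f x) < ε

/-- `φ` is an automorphism of the contraction group `(A, α)`, `A = F_p((t))`,
`α(x) = tx`: an additive automorphism, homeomorphic (continuous with continuous
inverse), commuting with `α`. -/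
def IsCtrAut (p : ℕ) (φ : LaurentSeries (ZMod p) ≃+ LaurentSeries (ZMod p)) : Prop :=
  LContinuous p φ ∧ LContinuous p φ.symm ∧ ∀ x, φ (tVar p * x) = tVar p * φ x

section Lemmas
variable {p : ℕ} [Fact p.Prime]

lemma one_lt_preal : (1:ℝ) < p := by
  exact_mod_cast (Fact.out : p.Prime).one_lt

lemma preal_pos : (0:ℝ) < p := lt_trans one_pos one_lt_preal

lemma labs_nonneg (x : LaurentSeries (ZMod p)) : 0 ≤ labs p x := by
  unfold labs; split
  · exact le_refl _
  · exact (zpow_pos preal_pos _).le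

lemma labs_pos {x : LaurentSeries (ZMod p)} (hx : x ≠ 0) : 0 < labs p x := by
  unfold labs; rw [if_neg hx]; exact zpow_pos preal_pos _

lemma labs_zero : labs p (0 : LaurentSeries (ZMod p)) = 0 := by simp [labs]

lemma labs_mul (x y : LaurentSeries (ZMod p)) : labs p (x*y) = labs p x * labs p y := by
  by_cases hx : x = 0
  · simp [hx, labs_zero]
  by_cases hy : y = 0
  · simp [hy, labs_zero]
  unfold labs
  rw [if_neg hx, if_neg hy, if_neg (mul_ne_zero hx hy), HahnSeries.order_mul hx hy,
    neg_add, zpow_add₀ (ne_of_gt preal_pos)]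

lemma labs_neg (x : LaurentSeries (ZMod p)) : labs p (-x) = labs p x := by
  unfold labs
  simp [HahnSeries.order_neg]

lemma labs_add_le (x y : LaurentSeries (ZMod p)) :
    labs p (x + y) ≤ max (labs p x) (labs p y) := by
  by_cases hxy : x + y = 0
  · rw [hxy, labs_zero, le_max_iff]
    left; exact labs_nonneg x
  by_cases hx : x = 0
  · simp [hx, le_max_iff]
  by_cases hy : y = 0
  · simp [hy, le_max_iff]
  have h := HahnSeries.min_order_le_order_add hxy
  unfold labs
  rw [if_neg hxy, if_neg hx, if_neg hy, le_max_iff]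
  rcases le_total x.order y.order with h1 | h1
  · left
    exact zpow_le_zpow_right₀ one_lt_preal.le (neg_le_neg ((min_eq_left h1 ▸ h)))
  · right
    exact zpow_le_zpow_right₀ one_lt_preal.le (neg_le_neg ((min_eq_right h1 ▸ h)))

lemma labs_le_of_coeff_zero {x : LaurentSeries (ZMod p)} {n : ℤ}
    (h : ∀ i < n, x.coeff i = 0) : labs p x ≤ (p:ℝ) ^ (-n) := by
  by_cases hx : x = 0
  · rw [hx, labs_zero]; exact (zpow_pos preal_pos _).le
  have hord : n ≤ x.order := by
    by_contra hlt
    push_neg at hlt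
    exact (HahnSeries.coeff_order_eq_zero.not.mpr hx) (h _ hlt)
  unfold labs
  rw [if_neg hx]
  exact zpow_le_zpow_right₀ one_lt_preal.le (neg_le_neg hord)

lemma tVar_ne_zero : tVar p ≠ 0 := by
  intro h
  have := congrArg (fun z : LaurentSeries (ZMod p) => z.coeff 1) h
  simp [tVar] at this

end Lemmas

section Main
variable {p : ℕ} [Fact p.Prime]

open HahnSeries

lemma exists_zpow_lt {ε : ℝ} (hε : 0 < ε) : ∃ n : ℤ, (p:ℝ) ^ (-n) < ε := by
  obtain ⟨N, hN⟩ := exists_pow_lt_of_lt_one hε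
    (inv_lt_one_of_one_lt₀ (one_lt_preal (p := p)))
  exact ⟨N, by rwa [zpow_neg, zpow_natCast, ← inv_pow]⟩

lemma trunc_exists (x : LaurentSeries (ZMod p)) (n : ℤ)
    (G : LaurentSeries (ZMod p) → Prop)
    (hG0 : G 0) (hGadd : ∀ a b, G a → G b → G (a + b))
    (hGsingle : ∀ (i : ℤ) (c : ZMod p), G (HahnSeries.single i c)) :
    ∃ q, G q ∧ labs p (x - q) ≤ (p:ℝ) ^ (-n) := by
  by_cases hx : x = 0
  · exact ⟨0, hG0, by simp [hx, labs_zero]; exact (zpow_pos preal_pos _).le⟩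
  have hfin : (x.support ∩ Set.Iio n).Finite := by
    apply (Set.finite_Icc x.order n).subset
    rintro i ⟨hi1, hi2⟩
    exact ⟨HahnSeries.order_le_of_coeff_ne_zero hi1, (le_of_lt hi2)⟩
  set s := hfin.toFinset with hs
  refine ⟨∑ i ∈ s, HahnSeries.single i (x.coeff i), ?_, ?_⟩
  · exact Finset.sum_induction _ G hGadd hG0 (fun i _ => hGsingle i _)
  · apply labs_le_of_coeff_zero
    intro i hi
    have hsum : (∑ j ∈ s, HahnSeries.single j (x.coeff j)).coeff i
        = ∑ j ∈ s, (HahnSeries.single j (x.coeff j)).coeff i :=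
      map_sum (HahnSeries.coeff.addMonoidHom i) _ s
    rw [HahnSeries.coeff_sub, hsum]
    by_cases hmem : i ∈ s
    · have h1 := Finset.sum_eq_single_of_mem
        (f := fun j => ((HahnSeries.single j (x.coeff j)) : LaurentSeries (ZMod p)).coeff i)
        i hmem (fun j _ hj => HahnSeries.coeff_single_of_ne (fun h => hj h.symm))
      rw [h1]
      simp
    · have h1 := Finset.sum_eq_zero (s := s)
        (f := fun j => ((HahnSeries.single j (x.coeff j)) : LaurentSeries (ZMod p)).coeff i)
        (fun j hj => HahnSeries.coeff_single_of_ne (fun h : i = j => hmem (h.symm ▸ hj)))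
      rw [h1, sub_zero]
      by_contra hne
      exact hmem (hfin.mem_toFinset.mpr ⟨hne, hi⟩)

end Main

section Main2
variable {p : ℕ} [Fact p.Prime]

lemma mul_lcontinuous {a : LaurentSeries (ZMod p)} (ha : a ≠ 0)
    (f : LaurentSeries (ZMod p) → LaurentSeries (ZMod p)) (hf : ∀ x, f x = a * x) :
    LContinuous p f := by
  intro x ε hε
  refine ⟨ε / labs p a, div_pos hε (labs_pos ha), fun x' h => ?_⟩
  have h2 : f x' - f x = a * (x' - x) := by rw [hf, hf]; ring
  rw [h2, labs_mul]
  calc labs p a * labs p (x' - x) < labs p a * (ε / labs p a) :=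
        mul_lt_mul_of_pos_left h (labs_pos ha)
    _ = ε := mul_div_cancel₀ ε (ne_of_gt (labs_pos ha))

/-- The map `ε : Aut(A, α) → F_p((t))ˣ`, `φ ↦ φ(1)`, is a group
isomorphism onto the multiplicative group of nonzero Laurent series, with inverse
`a ↦ (x ↦ a·x)`: every such automorphism is multiplication by its (nonzero) value at
`1`, and conversely multiplication by any `a ≠ 0` is such an automorphism. -/
theorem stmt14 {p : ℕ} (hp : p.Prime) [Fact p.Prime] :
    (∀ φ : LaurentSeries (ZMod p) ≃+ LaurentSeries (ZMod p), IsCtrAut p φ →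
      φ 1 ≠ 0 ∧ ∀ x, φ x = φ 1 * x) ∧
    (∀ a : LaurentSeries (ZMod p), a ≠ 0 →
      ∃ φ : LaurentSeries (ZMod p) ≃+ LaurentSeries (ZMod p),
        IsCtrAut p φ ∧ φ 1 = a ∧ ∀ x, φ x = a * x) := by
  constructor
  · rintro φ ⟨hc, _, hcomm⟩
    have h1ne : φ 1 ≠ 0 := by
      intro h
      exact one_ne_zero (φ.injective (h.trans (map_zero φ).symm))
    refine ⟨h1ne, fun x => ?_⟩
    -- G : the set of "good" elements
    set G : LaurentSeries (ZMod p) → Prop := fun q => φ q = φ 1 * q with hGdef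
    have hG0 : G 0 := by simp [hGdef]
    have hGadd : ∀ a b, G a → G b → G (a + b) := by
      intro a b ha hb
      show φ (a + b) = φ 1 * (a + b)
      rw [map_add, ha, hb, mul_add]
    have hGt : ∀ q, G q → G (tVar p * q) := by
      intro q hq
      show φ (tVar p * q) = φ 1 * (tVar p * q)
      rw [hcomm, hq]; ring
    have hGtinv : ∀ q, G (tVar p * q) → G q := by
      intro q hq
      have h2 : tVar p * φ q = tVar p * (φ 1 * q) := by
        rw [← hcomm, hq]; ring
      exact mul_left_cancel₀ tVar_ne_zero h2
    have hGs1 : ∀ i : ℤ, G (HahnSeries.single i (1 : ZMod p)) := by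
      intro i
      induction i using Int.induction_on with
      | zero => show φ _ = _ * _; rw [HahnSeries.single_zero_one, mul_one]
      | succ i ih =>
        have h2 : (HahnSeries.single ((i : ℤ) + 1) (1 : ZMod p) : LaurentSeries (ZMod p))
            = tVar p * HahnSeries.single (i : ℤ) 1 := by
          rw [tVar, HahnSeries.single_mul_single, one_mul, add_comm]
        rw [h2]; exact hGt _ ih
      | pred i ih =>
        apply hGtinv
        have h2 : tVar p * (HahnSeries.single (-(i : ℤ) - 1) (1 : ZMod p) : LaurentSeries (ZMod p))
            = HahnSeries.single (-(i : ℤ)) 1 := by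
          rw [tVar, HahnSeries.single_mul_single, one_mul]
          congr 1
          ring
        rw [h2]; exact ih
    have hGsingle : ∀ (i : ℤ) (c : ZMod p), G (HahnSeries.single i c) := by
      intro i c
      have h2 : (HahnSeries.single i c : LaurentSeries (ZMod p))
          = c.val • HahnSeries.single i (1 : ZMod p) := by
        have h0 : c = c.val • (1 : ZMod p) := by
          rw [nsmul_eq_mul, mul_one, ZMod.natCast_val, ZMod.cast_id]
        conv_lhs => rw [h0]
        exact map_nsmul (HahnSeries.single.addMonoidHom i) c.val (1 : ZMod p)
      rw [h2]
      generalize c.val = m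
      induction m with
      | zero => simpa using hG0
      | succ m ihm =>
        rw [succ_nsmul]
        exact hGadd _ _ ihm (hGs1 i)
    -- main limit argument
    have key : ∀ ε : ℝ, 0 < ε → labs p (φ x - φ 1 * x) < ε := by
      intro ε hε
      obtain ⟨δ, hδ, hcont⟩ := hc x ε hε
      have hL : 0 < labs p (φ 1) := labs_pos h1ne
      obtain ⟨n, hn⟩ := exists_zpow_lt (p := p) (lt_min hδ (div_pos hε hL))
      obtain ⟨q, hq, hqx⟩ := trunc_exists x n G hG0 hGadd hGsingle
      have hqx' : labs p (q - x) < min δ (ε / labs p (φ 1)) := by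
        rw [← labs_neg, neg_sub]
        exact lt_of_le_of_lt hqx hn
      have h3 : labs p (φ q - φ x) < ε := hcont q (lt_of_lt_of_le hqx' (min_le_left _ _))
      have h4 : labs p (φ 1 * (q - x)) < ε := by
        rw [labs_mul]
        calc labs p (φ 1) * labs p (q - x)
            < labs p (φ 1) * (ε / labs p (φ 1)) :=
              mul_lt_mul_of_pos_left (lt_of_lt_of_le hqx' (min_le_right _ _)) hL
          _ = ε := mul_div_cancel₀ ε (ne_of_gt hL)
      have hdecomp : φ x - φ 1 * x = -(φ q - φ x) + φ 1 * (q - x) := by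
        rw [hq]; ring
      rw [hdecomp]
      exact lt_of_le_of_lt (labs_add_le _ _) (max_lt (by rwa [labs_neg]) h4)
    by_contra hne
    have hz : φ x - φ 1 * x ≠ 0 := sub_ne_zero.mpr hne
    exact lt_irrefl _ (key _ (labs_pos hz))
  · intro a ha
    refine ⟨{ toFun := fun x => a * x
              invFun := fun x => a⁻¹ * x
              left_inv := fun x => by field_simp
              right_inv := fun x => by field_simp
              map_add' := fun x y => mul_add a x y }, ⟨?_, ?_, ?_⟩, mul_one a, fun x => rfl⟩
    · exact mul_lcontinuous ha _ (fun x => rfl)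
    · exact mul_lcontinuous (inv_ne_zero ha) _ (fun x => rfl)
    · intro x
      show a * (tVar p * x) = tVar p * (a * x)
      ring

end Main2
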